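/- Let Z ⊂ P^4 be the disjoint union of two sets A and B of 13 points each, with Z satisfying CB(5), Dh_Z(0) = 1, Dh_Z(1) = 4, Dh_Z(2) ≥ 8. Then Dh_Z(2) = 8 (so h_Z(2) = 13) and h_Z(3) ≤ 21. -/

import Mathlib

open MvPolynomial

noncomputable section

/-- Projective n-space over ℂ. -/
abbrev Pn (n : ℕ) := Projectivization ℂ (Fin (n + 1) → ℂ)

/-- Evaluation of a polynomial at a vector, as a linear map. -/
noncomputable def evalAt {n : ℕ} (v : Fin (n + 1) → ℂ) :
    MvPolynomial (Fin (n + 1)) ℂ →ₗ[ℂ] ℂ :=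
  (MvPolynomial.aeval v).toLinearMap

/-- The degree-`j` homogeneous piece of the polynomial ring `R = ℂ[x_0,…,x_n]`. -/
abbrev Rdeg (n j : ℕ) : Submodule ℂ (MvPolynomial (Fin (n + 1)) ℂ) :=
  MvPolynomial.homogeneousSubmodule (Fin (n + 1)) ℂ j

/-- Evaluation of degree-`j` forms at the points of a finite set `Z ⊂ ℙⁿ`
(using chosen representatives; its rank does not depend on the choice). -/
noncomputable def evalMap {n : ℕ} (Z : Finset (Pn n)) (j : ℕ) :
    (Rdeg n j) →ₗ[ℂ] (Z → ℂ) :=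
  (LinearMap.pi fun z : Z => evalAt (z : Pn n).rep).comp (Rdeg n j).subtype

/-- Hilbert function of a finite set of points `Z ⊂ ℙⁿ`. -/
noncomputable def hilb {n : ℕ} (Z : Finset (Pn n)) (j : ℕ) : ℕ :=
  Module.finrank ℂ (LinearMap.range (evalMap Z j))

/-- First difference of the Hilbert function (the `h`-vector entries). -/
noncomputable def Dh {n : ℕ} (Z : Finset (Pn n)) : ℕ → ℕ
  | 0 => hilb Z 0
  | (j + 1) => hilb Z (j + 1) - hilb Z j

/-- The Cayley–Bacharach property `CB(i)`: every degree-`i` form vanishing on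
`Z ∖ {P}` also vanishes at `P`, for every `P ∈ Z`. -/
def CB {n : ℕ} (Z : Finset (Pn n)) (i : ℕ) : Prop :=
  ∀ P ∈ Z, ∀ f ∈ Rdeg n i,
    (∀ Q ∈ Z, Q ≠ P → evalAt (Q : Pn n).rep f = 0) → evalAt P.rep f = 0

/-- The `d`-th power of the linear form corresponding to a point `P ∈ ℙⁿ`,
i.e. the image of `P` under the degree-`d` Veronese map (rep-scaled). -/
noncomputable def powForm (n d : ℕ) (P : Pn n) : MvPolynomial (Fin (n + 1)) ℂ :=
  (∑ i, P.rep i • MvPolynomial.X i) ^ d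

/-- `A` computes (is a decomposition of) the degree-`d` form `T`:
`T` lies in the span of the `d`-th powers of the linear forms given by `A`. -/
def computes (n d : ℕ) (A : Finset (Pn n)) (T : MvPolynomial (Fin (n + 1)) ℂ) : Prop :=
  T ∈ Submodule.span ℂ (powForm n d '' (A : Set (Pn n)))

/-- `A` is a non-redundant decomposition of `T`. -/
def nonRedundant (n d : ℕ) (A : Finset (Pn n)) (T : MvPolynomial (Fin (n + 1)) ℂ) : Prop :=
  computes n d A T ∧ ∀ A' : Finset (Pn n), A' ⊂ A → ¬ computes n d A' T

/-- The `d`-th Kruskal rank of `A` is `≥ k`: all subsets of `v_d(A)` of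
cardinality at most `k` are linearly independent. -/
def kruskalGe (n d : ℕ) (A : Finset (Pn n)) (k : ℕ) : Prop :=
  ∀ S : Finset (Pn n), S ⊆ A → S.card ≤ k →
    LinearIndependent ℂ (fun P : S => powForm n d P.1)

/-- Quadrics through `A`. -/
def quadricsThrough (n : ℕ) (A : Finset (Pn n)) : Set (MvPolynomial (Fin (n + 1)) ℂ) :=
  {f | f ∈ Rdeg n 2 ∧ ∀ P ∈ A, evalAt P.rep f = 0}

/-- Base locus of the linear system of quadric hypersurfaces through `A`. -/
def baseLocusQ (n : ℕ) (A : Finset (Pn n)) : Set (Pn n) :=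
  {Q | ∀ f ∈ quadricsThrough n A, evalAt Q.rep f = 0}

/-- Waring rank of a form `T`. -/
noncomputable def waringRank (n d : ℕ) (T : MvPolynomial (Fin (n + 1)) ℂ) : ℕ :=
  sInf {r | ∃ B : Finset (Pn n), B.card = r ∧ computes n d B T}

/-- Degree-`d` graded piece of the homogeneous ideal of `Z`. -/
noncomputable def idealDeg (n : ℕ) (Z : Finset (Pn n)) (d : ℕ) :
    Submodule ℂ (MvPolynomial (Fin (n + 1)) ℂ) :=
  Rdeg n d ⊓ ⨅ P ∈ Z, LinearMap.ker (evalAt (P : Pn n).rep)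

end

open scoped Classical


/-- If `f` kills no nonzero element of `V`, the image of `V` has the same finrank. -/
lemma map_finrank_eq' {M N : Type} [AddCommGroup M] [Module ℂ M] [FiniteDimensional ℂ M]
    [AddCommGroup N] [Module ℂ N] (V : Submodule ℂ M) (f : M →ₗ[ℂ] N)
    (h : ∀ x ∈ V, f x = 0 → x = 0) :
    Module.finrank ℂ (V.map f) = Module.finrank ℂ V := by
  have hinj : Function.Injective (f ∘ₗ V.subtype) := by
    rw [← LinearMap.ker_eq_bot]
    ext x
    simp only [LinearMap.mem_ker, Submodule.mem_bot, LinearMap.comp_apply,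
      Submodule.subtype_apply]
    constructor
    · intro hx
      exact Subtype.ext (h x.1 x.2 hx)
    · rintro rfl; simp
  have := LinearMap.finrank_range_of_inj hinj
  rwa [LinearMap.range_comp, Submodule.range_subtype] at this

/-- If the kernel of `f` meets `V` in a line at most (tested by a functional `φ`),
finrank drops by at most 1 under `f`. -/
lemma map_finrank_ge' {M N : Type} [AddCommGroup M] [Module ℂ M] [FiniteDimensional ℂ M]
    [AddCommGroup N] [Module ℂ N] (V : Submodule ℂ M) (f : M →ₗ[ℂ] N) (φ : M →ₗ[ℂ] ℂ)
    (h : ∀ x ∈ V, f x = 0 → φ x = 0 → x = 0) :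
    Module.finrank ℂ V ≤ Module.finrank ℂ (V.map f) + 1 := by
  set g : V →ₗ[ℂ] N := f ∘ₗ V.subtype with hg
  have hrn := LinearMap.finrank_range_add_finrank_ker g
  have hrange : LinearMap.range g = V.map f := by
    rw [hg, LinearMap.range_comp, Submodule.range_subtype]
  have hker : Module.finrank ℂ (LinearMap.ker g) ≤ 1 := by
    have hinj : Function.Injective (φ ∘ₗ V.subtype ∘ₗ (LinearMap.ker g).subtype) := by
      rw [← LinearMap.ker_eq_bot]
      ext x
      simp only [LinearMap.mem_ker, Submodule.mem_bot, LinearMap.comp_apply,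
        Submodule.subtype_apply]
      constructor
      · intro hx
        have hfx : f (x.1 : M) = 0 := x.2
        exact Subtype.ext (Subtype.ext (h x.1.1 x.1.2 hfx hx))
      · rintro rfl; simp
    calc Module.finrank ℂ (LinearMap.ker g) ≤ Module.finrank ℂ ℂ :=
        LinearMap.finrank_le_finrank_of_injective hinj
      _ = 1 := Module.finrank_self ℂ
  rw [hrange] at hrn
  omega

/-- finrank of `V ⊓ ker φ` is at least `finrank V - 1`. -/
lemma inf_ker_finrank_ge {M : Type} [AddCommGroup M] [Module ℂ M] [FiniteDimensional ℂ M]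
    (V : Submodule ℂ M) (φ : M →ₗ[ℂ] ℂ) :
    Module.finrank ℂ V ≤ Module.finrank ℂ (V ⊓ LinearMap.ker φ : Submodule ℂ M) + 1 := by
  set g : V →ₗ[ℂ] ℂ := φ ∘ₗ V.subtype with hg
  have hrn := LinearMap.finrank_range_add_finrank_ker g
  have h1 : Module.finrank ℂ (LinearMap.range g) ≤ 1 := by
    calc Module.finrank ℂ (LinearMap.range g) ≤ Module.finrank ℂ ℂ := Submodule.finrank_le _
      _ = 1 := Module.finrank_self ℂ
  have h2 : Module.finrank ℂ (LinearMap.ker g) ≤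
      Module.finrank ℂ (V ⊓ LinearMap.ker φ : Submodule ℂ M) := by
    set e : LinearMap.ker g →ₗ[ℂ] (V ⊓ LinearMap.ker φ : Submodule ℂ M) :=
      LinearMap.codRestrict _ (V.subtype ∘ₗ (LinearMap.ker g).subtype)
        (fun x => ⟨x.1.2, x.2⟩) with he
    have hinj : Function.Injective e := by
      intro x y hxy
      have h' : (x.1 : M) = (y.1 : M) := by
        have := congrArg Subtype.val hxy; exact this
      exact Subtype.ext (Subtype.ext h')
    exact LinearMap.finrank_le_finrank_of_injective hinj
  omega

/-- Key linear algebra lemma: if `dim U + dim W > |ι|`, there are `u ∈ U`, `w ∈ W`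
whose pointwise product is supported at exactly one point. -/
lemma keyLA : ∀ (n : ℕ) (ι : Type) [Fintype ι], Fintype.card ι = n →
    ∀ (U W : Submodule ℂ (ι → ℂ)), n < Module.finrank ℂ U + Module.finrank ℂ W →
    ∃ (P : ι) (u w : ι → ℂ), u ∈ U ∧ w ∈ W ∧
      (∀ Q, Q ≠ P → u Q * w Q = 0) ∧ u P * w P ≠ 0 := by
  intro n
  induction n using Nat.strong_induction_on with
  | _ n IH =>
    intro ι _ hn U W hlt
    have hfinU : Module.finrank ℂ U ≤ n := by
      calc Module.finrank ℂ U ≤ Module.finrank ℂ (ι → ℂ) := Submodule.finrank_le _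
        _ = n := by rw [Module.finrank_fintype_fun_eq_card, hn]
    have hfinW : Module.finrank ℂ W ≤ n := by
      calc Module.finrank ℂ W ≤ Module.finrank ℂ (ι → ℂ) := Submodule.finrank_le _
        _ = n := by rw [Module.finrank_fintype_fun_eq_card, hn]
    have hn0 : 0 < n := by omega
    have hne : Nonempty ι := by
      rw [← Fintype.card_pos_iff, hn]; exact hn0
    obtain ⟨P⟩ := hne
    have hcard' : Fintype.card {Q : ι // Q ≠ P} = n - 1 := by
      have h1 : Fintype.card {Q : ι // ¬ Q = P} = Fintype.card ι - Fintype.card {Q : ι // Q = P} :=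
        Fintype.card_subtype_compl _
      rw [Fintype.card_subtype_eq, hn] at h1
      exact h1
    set r : (ι → ℂ) →ₗ[ℂ] ({Q : ι // Q ≠ P} → ℂ) :=
      LinearMap.funLeft ℂ ℂ (fun q : {Q : ι // Q ≠ P} => q.1) with hr
    have hrzero : ∀ x : ι → ℂ, r x = 0 → x P = 0 → x = 0 := by
      intro x hx hxP
      funext Q
      by_cases hQ : Q = P
      · rw [hQ, hxP]; rfl
      · exact congrFun hx ⟨Q, hQ⟩
    by_cases hU : ∃ u ∈ U, u P ≠ 0
    · obtain ⟨u, huU, huP⟩ := hU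
      by_cases hW : ∃ w ∈ W, w ≠ 0 ∧ ∀ Q, Q ≠ P → w Q = 0
      · -- direct conclusion
        obtain ⟨w, hwW, hw0, hwsupp⟩ := hW
        have hwP : w P ≠ 0 := by
          intro h
          apply hw0
          funext Q
          by_cases hQ : Q = P
          · rw [hQ, h]; rfl
          · rw [hwsupp Q hQ]; rfl
        exact ⟨P, u, w, huU, hwW, fun Q hQ => by rw [hwsupp Q hQ, mul_zero],
          mul_ne_zero huP hwP⟩
      · -- r is injective on W; cut U down by the functional at P
        have hWinj : ∀ x ∈ W, r x = 0 → x = 0 := by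
          intro x hx hrx
          by_contra hx0
          exact hW ⟨x, hx, hx0, fun Q hQ => congrFun hrx ⟨Q, hQ⟩⟩
        set K := U ⊓ LinearMap.ker (LinearMap.proj P : (ι → ℂ) →ₗ[ℂ] ℂ) with hK
        have hKfin : Module.finrank ℂ U ≤ Module.finrank ℂ K + 1 :=
          inf_ker_finrank_ge U (LinearMap.proj P)
        have hKmap : Module.finrank ℂ (K.map r) = Module.finrank ℂ K :=
          map_finrank_eq' K r (fun x hx hrx => hrzero x hrx hx.2)
        have hWmap : Module.finrank ℂ (W.map r) = Module.finrank ℂ W :=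
          map_finrank_eq' W r hWinj
        have hU1 : 1 ≤ Module.finrank ℂ U := by
          by_contra h
          have h0 : Module.finrank ℂ U = 0 := by omega
          have hUbot : U = ⊥ := Submodule.finrank_eq_zero.mp h0
          rw [hUbot] at huU
          exact huP (by simpa using congrFun (Submodule.mem_bot ℂ |>.mp huU) P)
        have hlt' : n - 1 < Module.finrank ℂ (K.map r) + Module.finrank ℂ (W.map r) := by
          rw [hKmap, hWmap]; omega
        obtain ⟨P', u', w', hu'K, hw'W, hprod, hP'⟩ :=
          IH (n - 1) (by omega) {Q : ι // Q ≠ P} hcard' (K.map r) (W.map r) hlt'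
        obtain ⟨u₀, hu₀K, rfl⟩ := hu'K
        obtain ⟨w₀, hw₀W, rfl⟩ := hw'W
        refine ⟨P'.1, u₀, w₀, hu₀K.1, hw₀W, ?_, hP'⟩
        intro Q hQ
        by_cases hQP : Q = P
        · have h0 : u₀ P = 0 := hu₀K.2
          rw [hQP, h0, zero_mul]
        · exact hprod ⟨Q, hQP⟩ (fun h => hQ (congrArg Subtype.val h))
    · -- every element of U vanishes at P
      push_neg at hU
      have hUinj : ∀ x ∈ U, r x = 0 → x = 0 := by
        intro x hx hrx
        exact hrzero x hrx (hU x hx)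
      have hUmap : Module.finrank ℂ (U.map r) = Module.finrank ℂ U :=
        map_finrank_eq' U r hUinj
      have hWmap : Module.finrank ℂ W ≤ Module.finrank ℂ (W.map r) + 1 :=
        map_finrank_ge' W r (LinearMap.proj P) (fun x _ hrx hxP => hrzero x hrx hxP)
      have hlt' : n - 1 < Module.finrank ℂ (U.map r) + Module.finrank ℂ (W.map r) := by
        rw [hUmap]; omega
      obtain ⟨P', u', w', hu'U, hw'W, hprod, hP'⟩ :=
        IH (n - 1) (by omega) {Q : ι // Q ≠ P} hcard' (U.map r) (W.map r) hlt'
      obtain ⟨u₀, hu₀U, rfl⟩ := hu'U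
      obtain ⟨w₀, hw₀W, rfl⟩ := hw'W
      refine ⟨P'.1, u₀, w₀, hu₀U, hw₀W, ?_, hP'⟩
      intro Q hQ
      by_cases hQP : Q = P
      · rw [hQP, hU u₀ hu₀U, zero_mul]
      · exact hprod ⟨Q, hQP⟩ (fun h => hQ (congrArg Subtype.val h))


lemma exists_good_linear (Z : Finset (Pn 4)) :
    ∃ ℓ : MvPolynomial (Fin 5) ℂ, ℓ.IsHomogeneous 1 ∧ ∀ P ∈ Z, evalAt (P : Pn 4).rep ℓ ≠ 0 := by
  classical
  set f : Pn 4 → MvPolynomial (Fin 5) ℂ := fun P => ∑ i, P.rep i • MvPolynomial.X i with hf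
  have hfne : ∀ P : Pn 4, f P ≠ 0 := by
    intro P h0
    apply P.rep_nonzero
    funext i
    have h1 := congrArg (MvPolynomial.eval (Pi.single i 1)) h0
    simpa [hf, MvPolynomial.smul_eq_C_mul, Pi.single_apply, mul_ite, mul_one, mul_zero,
      Finset.sum_ite_eq'] using h1
  have hFne : (∏ P ∈ Z, f P) ≠ 0 := Finset.prod_ne_zero_iff.mpr (fun P _ => hfne P)
  have hex : ∃ c : Fin 5 → ℂ, MvPolynomial.eval c (∏ P ∈ Z, f P) ≠ 0 := by
    by_contra h
    push_neg at h
    exact hFne (MvPolynomial.funext fun c => by simp [h c])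
  obtain ⟨c, hc⟩ := hex
  have hfac : ∀ P ∈ Z, MvPolynomial.eval c (f P) ≠ 0 := by
    intro P hP h0
    apply hc
    rw [map_prod]
    exact Finset.prod_eq_zero hP h0
  refine ⟨∑ i, c i • MvPolynomial.X i, ?_, ?_⟩
  · have hmem : (∑ i, c i • MvPolynomial.X i) ∈
        MvPolynomial.homogeneousSubmodule (Fin 5) ℂ 1 :=
      Submodule.sum_mem _ fun i _ => Submodule.smul_mem _ _
        ((MvPolynomial.mem_homogeneousSubmodule _ _).mpr (MvPolynomial.isHomogeneous_X ℂ i))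
    exact (MvPolynomial.mem_homogeneousSubmodule _ _).mp hmem
  · intro P hP
    have h1 := hfac P hP
    have h2 : MvPolynomial.eval c (f P) = ∑ i, P.rep i * c i := by
      simp [hf, MvPolynomial.smul_eq_C_mul]
    have h3 : evalAt (P : Pn 4).rep (∑ i, c i • MvPolynomial.X i) = ∑ i, c i * P.rep i := by
      simp [evalAt, MvPolynomial.smul_eq_C_mul]
    rw [h3]
    rw [h2] at h1
    simpa [mul_comm] using h1

set_option synthInstance.maxHeartbeats 1000000 in
lemma hilb_mono (Z : Finset (Pn 4)) (j : ℕ) : hilb Z j ≤ hilb Z (j + 1) := by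
  classical
  obtain ⟨ℓ, hℓhom, hℓne⟩ := exists_good_linear Z
  set D : (↥Z → ℂ) →ₗ[ℂ] (↥Z → ℂ) :=
    LinearMap.pi (fun z : ↥Z => evalAt (z : Pn 4).rep ℓ • LinearMap.proj z) with hD
  have hDapp : ∀ (x : ↥Z → ℂ) (z : ↥Z), D x z = evalAt (z : Pn 4).rep ℓ * x z :=
    fun x z => rfl
  have hDinj : ∀ x : ↥Z → ℂ, D x = 0 → x = 0 := by
    intro x hx
    funext z
    have h1 := congrFun hx z
    rw [hDapp] at h1
    have h2 : evalAt (z : Pn 4).rep ℓ ≠ 0 := hℓne z.1 z.2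
    have h3 : x z = 0 := by
      rcases mul_eq_zero.mp h1 with h | h
      · exact absurd h h2
      · exact h
    exact h3
  have hmap : (LinearMap.range (evalMap Z j)).map D ≤ LinearMap.range (evalMap Z (j + 1)) := by
    rintro x ⟨y, ⟨g, rfl⟩, rfl⟩
    have hmem : ℓ * g.1 ∈ Rdeg 4 (j + 1) := by
      rw [MvPolynomial.mem_homogeneousSubmodule]
      have := hℓhom.mul ((MvPolynomial.mem_homogeneousSubmodule _ _).mp g.2)
      rwa [Nat.add_comm 1 j] at this
    refine ⟨⟨ℓ * g.1, hmem⟩, ?_⟩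
    funext z
    show evalAt (z : Pn 4).rep (ℓ * g.1) = D (evalMap Z j g) z
    rw [hDapp]
    show (MvPolynomial.aeval (z : Pn 4).rep) (ℓ * g.1) =
      evalAt (z : Pn 4).rep ℓ * (MvPolynomial.aeval (z : Pn 4).rep) g.1
    rw [map_mul]
    rfl
  have h1 : hilb Z j = Module.finrank ℂ ((LinearMap.range (evalMap Z j)).map D) :=
    (map_finrank_eq' _ D (fun x _ hx => hDinj x hx)).symm
  rw [hilb, hilb] at *
  rw [h1]
  exact Submodule.finrank_mono hmap

lemma hilb_two_add_three_le (Z : Finset (Pn 4)) (hCB : CB Z 5) :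
    hilb Z 2 + hilb Z 3 ≤ Z.card := by
  classical
  by_contra hcon
  push_neg at hcon
  obtain ⟨P, u, w, hu, hw, hprod, hPne⟩ :=
    keyLA Z.card ↥Z (Fintype.card_coe Z)
      (LinearMap.range (evalMap Z 2)) (LinearMap.range (evalMap Z 3))
      (by simpa [hilb] using hcon)
  obtain ⟨f, rfl⟩ := hu
  obtain ⟨g, rfl⟩ := hw
  have hmul : ∀ v : Fin 5 → ℂ, ∀ a b : MvPolynomial (Fin 5) ℂ,
      evalAt v (a * b) = evalAt v a * evalAt v b := by
    intro v a b
    show (MvPolynomial.aeval v) (a * b) = (MvPolynomial.aeval v) a * (MvPolynomial.aeval v) b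
    rw [map_mul]
  have hmem : f.1 * g.1 ∈ Rdeg 4 5 := by
    rw [MvPolynomial.mem_homogeneousSubmodule]
    exact ((MvPolynomial.mem_homogeneousSubmodule _ _).mp f.2).mul
      ((MvPolynomial.mem_homogeneousSubmodule _ _).mp g.2)
  have hvan : ∀ Q ∈ Z, Q ≠ P.1 → evalAt (Q : Pn 4).rep (f.1 * g.1) = 0 := by
    intro Q hQ hQP
    rw [hmul]
    exact hprod ⟨Q, hQ⟩ (fun h => hQP (congrArg Subtype.val h))
  have h0 := hCB P.1 P.2 (f.1 * g.1) hmem hvan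
  rw [hmul] at h0
  exact hPne h0

/-- For `Z ⊂ ℙ⁴` the disjoint union of two `13`-point sets,
satisfying `CB(5)` with `Dh_Z(0)=1`, `Dh_Z(1)=4`, `Dh_Z(2) ≥ 8`: then `Dh_Z(2)=8`
(so `h_Z(2)=13`) and `h_Z(3) ≤ 21`. -/
theorem stmt13 (A B : Finset (Pn 4)) (hd : Disjoint A B) (hA : A.card = 13)
    (hB : B.card = 13) (hCB : CB (A ∪ B) 5) (h0 : Dh (A ∪ B) 0 = 1)
    (h1 : Dh (A ∪ B) 1 = 4) (h2 : 8 ≤ Dh (A ∪ B) 2) :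
    Dh (A ∪ B) 2 = 8 ∧ hilb (A ∪ B) 2 = 13 ∧ hilb (A ∪ B) 3 ≤ 21 := by
  have hcard : (A ∪ B).card = 26 := by
    rw [Finset.card_union_of_disjoint hd, hA, hB]
  have h23 : hilb (A ∪ B) 2 + hilb (A ∪ B) 3 ≤ 26 := by
    rw [← hcard]; exact hilb_two_add_three_le _ hCB
  have hmono : hilb (A ∪ B) 2 ≤ hilb (A ∪ B) 3 := hilb_mono _ 2
  have d0 : Dh (A ∪ B) 0 = hilb (A ∪ B) 0 := rfl
  have d1 : Dh (A ∪ B) 1 = hilb (A ∪ B) 1 - hilb (A ∪ B) 0 := rfl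
  have d2 : Dh (A ∪ B) 2 = hilb (A ∪ B) 2 - hilb (A ∪ B) 1 := rfl
  rw [d0] at h0
  rw [d1] at h1
  rw [d2] at h2
  rw [d2]
  omega
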